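/- Let a < b < c < d be real numbers, write s = d+c-a-b, and let Φ be the trapezoidal uncertainty distribution with parameters a, b, c, d. Then ∫₀^∞ (1 - Φ(r)) dr − ∫_{-∞}^0 Φ(r) dr = (1/(3s))·((d³-c³)/(d-c) − (b³-a³)/(b-a)). -/

import Mathlib

open MeasureTheory

/-- The trapezoidal uncertainty distribution with parameters `a < b < c < d`. -/
noncomputable def trapPhi (a b c d : ℝ) (x : ℝ) : ℝ :=
  if x ≤ a then 0
  else if x ≤ b then (x - a) ^ 2 / ((d + c - a - b) * (b - a))
  else if x ≤ c then (2 * x - a - b) / (d + c - a - b)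
  else if x ≤ d then 1 - (d - x) ^ 2 / ((d + c - a - b) * (d - c))
  else 1

lemma trapPhi_of_le {a b c d x : ℝ} (h : x ≤ a) : trapPhi a b c d x = 0 := by
  simp [trapPhi, h]

lemma trapPhi_of_ge {a b c d x : ℝ} (hab : a < b) (hbc : b < c) (hcd : c < d)
    (h : d ≤ x) : trapPhi a b c d x = 1 := by
  unfold trapPhi
  rw [if_neg (by linarith), if_neg (by linarith), if_neg (by linarith)]
  rcases le_or_gt x d with h' | h'
  · have : x = d := le_antisymm h' h
    simp [this]
  · rw [if_neg (not_le.mpr h')]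

lemma trapPhi_continuous {a b c d : ℝ} (hab : a < b) (hbc : b < c) (hcd : c < d) :
    Continuous (trapPhi a b c d) := by
  have hs : d + c - a - b ≠ 0 := by nlinarith
  have hba : b - a ≠ 0 := by linarith
  have hdc : d - c ≠ 0 := by linarith
  unfold trapPhi
  refine Continuous.if_le continuous_const ?_ continuous_id continuous_const ?_
  · refine Continuous.if_le (((continuous_id.sub continuous_const).pow 2).div_const _)
      ?_ continuous_id continuous_const ?_
    · refine Continuous.if_le
        (((continuous_const.mul continuous_id).sub continuous_const |>.sub
          continuous_const).div_const _) ?_ continuous_id continuous_const ?_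
      · refine Continuous.if_le
          (continuous_const.sub (((continuous_const.sub continuous_id).pow 2).div_const _))
          continuous_const continuous_id continuous_const ?_
        intro x hx
        subst hx
        simp
      · intro x hx
        subst hx
        rw [if_pos hcd.le]
        field_simp
        ring
    · intro x hx
      subst hx
      rw [if_pos hbc.le]
      field_simp
      ring
  · intro x hx
    subst hx
    rw [if_pos hab.le]
    simp

set_option maxHeartbeats 1000000 in
theorem trapezoidal_expected_value (a b c d : ℝ) (hab : a < b) (hbc : b < c)
    (hcd : c < d) :
    (∫ r in Set.Ioi (0 : ℝ), (1 - trapPhi a b c d r))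
      - (∫ r in Set.Iio (0 : ℝ), trapPhi a b c d r)
      = (1 / (3 * (d + c - a - b)))
        * ((d ^ 3 - c ^ 3) / (d - c) - (b ^ 3 - a ^ 3) / (b - a)) := by
  have hs : (0:ℝ) < d + c - a - b := by linarith
  have hs' : d + c - a - b ≠ 0 := ne_of_gt hs
  have hba : b - a ≠ 0 := sub_ne_zero.mpr hab.ne'
  have hdc : d - c ≠ 0 := sub_ne_zero.mpr hcd.ne'
  have hcont : Continuous (trapPhi a b c d) := trapPhi_continuous hab hbc hcd
  have hcont1 : Continuous (fun r => 1 - trapPhi a b c d r) := continuous_const.sub hcont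
  set U : ℝ := max d 0 with hUdef
  set L : ℝ := min a 0 with hLdef
  have hU0 : (0:ℝ) ≤ U := le_max_right _ _
  have hL0 : L ≤ 0 := min_le_right _ _
  have hdU : d ≤ U := le_max_left _ _
  have hLa : L ≤ a := min_le_left _ _
  -- Step A : first integral over (0,∞) equals interval integral 0..U
  have hA : (∫ r in Set.Ioi (0 : ℝ), (1 - trapPhi a b c d r))
      = ∫ r in (0:ℝ)..U, (1 - trapPhi a b c d r) := by
    rw [intervalIntegral.integral_of_le hU0, ← Set.Ioc_union_Ioi_eq_Ioi hU0]
    have heq : Set.EqOn (fun r => 1 - trapPhi a b c d r) (fun _ => (0:ℝ)) (Set.Ioi U) := by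
      intro x hx
      have : d ≤ x := le_trans hdU (le_of_lt hx)
      simp [trapPhi_of_ge hab hbc hcd this]
    rw [MeasureTheory.setIntegral_union (Set.Ioc_disjoint_Ioi le_rfl) measurableSet_Ioi
      (hcont1.integrableOn_Ioc)
      ((integrableOn_congr_fun heq measurableSet_Ioi).mpr (integrableOn_zero))]
    rw [MeasureTheory.setIntegral_eq_zero_of_forall_eq_zero (fun x hx => heq hx), add_zero]
  -- Step B : second integral over (-∞,0) equals interval integral L..0
  have hB : (∫ r in Set.Iio (0 : ℝ), trapPhi a b c d r)
      = ∫ r in L..(0:ℝ), trapPhi a b c d r := by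
    rw [intervalIntegral.integral_of_le hL0, ← Set.Iio_union_Ico_eq_Iio hL0]
    have heq : Set.EqOn (trapPhi a b c d) (fun _ => (0:ℝ)) (Set.Iio L) := by
      intro x hx
      exact trapPhi_of_le (le_trans (le_of_lt hx) hLa)
    have hdisj : Disjoint (Set.Iio L) (Set.Ico L (0:ℝ)) := by
      apply Set.disjoint_left.mpr
      intro x hx hx2
      exact absurd hx2.1 (not_le.mpr hx)
    have hint1 : IntegrableOn (trapPhi a b c d) (Set.Iio L) volume :=
      (integrableOn_congr_fun heq measurableSet_Iio).mpr integrableOn_zero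
    have hint2 : IntegrableOn (trapPhi a b c d) (Set.Ico L (0:ℝ)) volume :=
      (hcont.integrableOn_Icc).mono_set Set.Ico_subset_Icc_self
    rw [MeasureTheory.setIntegral_union hdisj measurableSet_Ico hint1 hint2]
    rw [MeasureTheory.setIntegral_eq_zero_of_forall_eq_zero (fun x hx => heq hx), zero_add,
      MeasureTheory.integral_Ico_eq_integral_Ioo, MeasureTheory.integral_Ioc_eq_integral_Ioo]
  rw [hA, hB]
  -- remove the 1 from the first integrand
  have hsplit : (∫ r in (0:ℝ)..U, (1 - trapPhi a b c d r))
      = U - ∫ r in (0:ℝ)..U, trapPhi a b c d r := by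
    rw [intervalIntegral.integral_sub intervalIntegrable_const (hcont.intervalIntegrable _ _)]
    simp
  rw [hsplit]
  have hjoin : (∫ r in L..(0:ℝ), trapPhi a b c d r) + (∫ r in (0:ℝ)..U, trapPhi a b c d r)
      = ∫ r in L..U, trapPhi a b c d r := by
    exact intervalIntegral.integral_add_adjacent_intervals
      (hcont.intervalIntegrable _ _) (hcont.intervalIntegrable _ _)
  have hLU : ∫ r in L..U, trapPhi a b c d r
      = (∫ r in L..a, trapPhi a b c d r) + (∫ r in a..b, trapPhi a b c d r)
        + (∫ r in b..c, trapPhi a b c d r) + (∫ r in c..d, trapPhi a b c d r)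
        + (∫ r in d..U, trapPhi a b c d r) := by
    rw [intervalIntegral.integral_add_adjacent_intervals (hcont.intervalIntegrable _ _)
      (hcont.intervalIntegrable _ _)]
    rw [intervalIntegral.integral_add_adjacent_intervals (hcont.intervalIntegrable _ _)
      (hcont.intervalIntegrable _ _)]
    rw [intervalIntegral.integral_add_adjacent_intervals (hcont.intervalIntegrable _ _)
      (hcont.intervalIntegrable _ _)]
    rw [intervalIntegral.integral_add_adjacent_intervals (hcont.intervalIntegrable _ _)
      (hcont.intervalIntegrable _ _)]
  -- piece values
  have I0 : (∫ r in L..a, trapPhi a b c d r) = 0 := by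
    rw [intervalIntegral.integral_congr (g := fun _ => (0:ℝ)) ?_, intervalIntegral.integral_const,
      smul_zero]
    intro x hx
    rw [Set.uIcc_of_le hLa] at hx
    exact trapPhi_of_le hx.2
  have I4 : (∫ r in d..U, trapPhi a b c d r) = U - d := by
    rw [intervalIntegral.integral_congr (g := fun _ => (1:ℝ)) ?_, intervalIntegral.integral_const,
      smul_eq_mul, mul_one]
    intro x hx
    rw [Set.uIcc_of_le hdU] at hx
    exact trapPhi_of_ge hab hbc hcd hx.1
  have I1 : (∫ r in a..b, trapPhi a b c d r)
      = (b - a) ^ 3 / (3 * ((d + c - a - b) * (b - a))) := by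
    have heqn : Set.EqOn (trapPhi a b c d)
        (fun x => (x - a) ^ 2 / ((d + c - a - b) * (b - a))) (Set.uIcc a b) := by
      intro x hx
      rw [Set.uIcc_of_le hab.le] at hx
      unfold trapPhi
      rcases le_or_gt x a with h | h
      · have : x = a := le_antisymm h hx.1
        simp [this]
      · rw [if_neg (not_le.mpr h), if_pos hx.2]
    have hderiv : ∀ x ∈ Set.uIcc a b,
        HasDerivAt (fun x => (x - a) ^ 3 / (3 * ((d + c - a - b) * (b - a))))
          ((x - a) ^ 2 / ((d + c - a - b) * (b - a))) x := by
      intro x _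
      have h := (((hasDerivAt_id x).sub_const a).pow 3).div_const
        (3 * ((d + c - a - b) * (b - a)))
      refine h.congr_deriv ?_
      simp only [id]
      field_simp
      ring
    have hint : IntervalIntegrable
        (fun x => (x - a) ^ 2 / ((d + c - a - b) * (b - a))) volume a b := by
      apply Continuous.intervalIntegrable
      fun_prop
    rw [intervalIntegral.integral_congr heqn,
      intervalIntegral.integral_eq_sub_of_hasDerivAt hderiv hint]
    simp
  have I2 : (∫ r in b..c, trapPhi a b c d r)
      = (c ^ 2 - (a + b) * c) / (d + c - a - b) - (b ^ 2 - (a + b) * b) / (d + c - a - b) := by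
    have heqn : Set.EqOn (trapPhi a b c d)
        (fun x => (2 * x - a - b) / (d + c - a - b)) (Set.uIcc b c) := by
      intro x hx
      rw [Set.uIcc_of_le hbc.le] at hx
      unfold trapPhi
      rw [if_neg (by linarith [hx.1] : ¬ x ≤ a)]
      rcases le_or_gt x b with h | h
      · have hxb : x = b := le_antisymm h hx.1
        subst hxb
        rw [if_pos le_rfl]
        field_simp
        ring
      · rw [if_neg (not_le.mpr h), if_pos hx.2]
    have hderiv : ∀ x ∈ Set.uIcc b c,
        HasDerivAt (fun x => (x ^ 2 - (a + b) * x) / (d + c - a - b))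
          ((2 * x - a - b) / (d + c - a - b)) x := by
      intro x _
      have h := ((hasDerivAt_pow 2 x).sub ((hasDerivAt_id x).const_mul (a + b))).div_const
        (d + c - a - b)
      refine h.congr_deriv ?_
      ring
    have hint : IntervalIntegrable
        (fun x => (2 * x - a - b) / (d + c - a - b)) volume b c := by
      apply Continuous.intervalIntegrable
      fun_prop
    rw [intervalIntegral.integral_congr heqn,
      intervalIntegral.integral_eq_sub_of_hasDerivAt hderiv hint]
  have I3 : (∫ r in c..d, trapPhi a b c d r)
      = (d + (d - d) ^ 3 / (3 * ((d + c - a - b) * (d - c))))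
        - (c + (d - c) ^ 3 / (3 * ((d + c - a - b) * (d - c)))) := by
    have heqn : Set.EqOn (trapPhi a b c d)
        (fun x => 1 - (d - x) ^ 2 / ((d + c - a - b) * (d - c))) (Set.uIcc c d) := by
      intro x hx
      rw [Set.uIcc_of_le hcd.le] at hx
      unfold trapPhi
      rw [if_neg (by linarith [hx.1] : ¬ x ≤ a), if_neg (by linarith [hx.1] : ¬ x ≤ b)]
      rcases le_or_gt x c with h | h
      · have hxc : x = c := le_antisymm h hx.1
        subst hxc
        rw [if_pos le_rfl]
        field_simp
        ring
      · rw [if_neg (not_le.mpr h), if_pos hx.2]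
    have hderiv : ∀ x ∈ Set.uIcc c d,
        HasDerivAt (fun x => x + (d - x) ^ 3 / (3 * ((d + c - a - b) * (d - c))))
          (1 - (d - x) ^ 2 / ((d + c - a - b) * (d - c))) x := by
      intro x _
      have h := (hasDerivAt_id x).add
        ((((hasDerivAt_id x).const_sub d).pow 3).div_const (3 * ((d + c - a - b) * (d - c))))
      refine h.congr_deriv ?_
      simp only [id]
      field_simp
      ring
    have hint : IntervalIntegrable
        (fun x => 1 - (d - x) ^ 2 / ((d + c - a - b) * (d - c))) volume c d := by
      apply Continuous.intervalIntegrable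
      fun_prop
    rw [intervalIntegral.integral_congr heqn,
      intervalIntegral.integral_eq_sub_of_hasDerivAt hderiv hint]
  have : U - (∫ r in (0:ℝ)..U, trapPhi a b c d r) - (∫ r in L..(0:ℝ), trapPhi a b c d r)
      = U - ∫ r in L..U, trapPhi a b c d r := by rw [← hjoin]; ring
  rw [this, hLU, I0, I1, I2, I3, I4]
  field_simp
  ring
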